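/- Let t and u be odd positive integers with t² - Du² = 4, where D = p₁p₂ is a product of distinct primes p₁ ≡ p₂ ≡ 3 (mod 4). Then gcd(t-2, t+2) = 1 and (t-2)(t+2) = D u², so there exist odd positive integers r, s with (t-2, t+2) equal to one of (p₁r², p₂s²), (p₂r², p₁s²), (p₁p₂r², s²), (r², p₁p₂s²). -/

import Mathlib

lemma exists_sq_aux (a b u : ℤ) (ha : 0 < a) (hb : 0 < b) (hab : IsCoprime a b)
    (h : a * b = u ^ 2) : ∃ r s : ℤ, 0 < r ∧ 0 < s ∧ a = r ^ 2 ∧ b = s ^ 2 := by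
  obtain ⟨r, hr⟩ := Int.sq_of_isCoprime hab h
  obtain ⟨s, hs⟩ := Int.sq_of_isCoprime hab.symm (by rw [mul_comm]; exact h)
  have hra : a = r ^ 2 := by
    rcases hr with hr | hr
    · exact hr
    · nlinarith [sq_nonneg r]
  have hsb : b = s ^ 2 := by
    rcases hs with hs | hs
    · exact hs
    · nlinarith [sq_nonneg s]
  refine ⟨|r|, |s|, ?_, ?_, by rw [sq_abs]; exact hra, by rw [sq_abs]; exact hsb⟩
  · exact abs_pos.mpr (by rintro rfl; simp at hra; omega)
  · exact abs_pos.mpr (by rintro rfl; simp at hsb; omega)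

lemma case_helper (d e a b u : ℤ) (hd : 0 < d) (he : 0 < e) (ha : 0 < a) (hb : 0 < b)
    (haodd : Odd a) (hbodd : Odd b) (hab : IsCoprime a b)
    (hda : d ∣ a) (heb : e ∣ b) (h : a * b = d * e * u ^ 2) :
    ∃ r s : ℤ, Odd r ∧ Odd s ∧ 0 < r ∧ 0 < s ∧ a = d * r ^ 2 ∧ b = e * s ^ 2 := by
  obtain ⟨c, rfl⟩ := hda
  obtain ⟨f, rfl⟩ := heb
  have hc : 0 < c := by
    rcases mul_pos_iff.mp ha with ⟨_, h'⟩ | ⟨h', _⟩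
    · exact h'
    · linarith
  have hf : 0 < f := by
    rcases mul_pos_iff.mp hb with ⟨_, h'⟩ | ⟨h', _⟩
    · exact h'
    · linarith
  have hde : d * e ≠ 0 := by positivity
  have hcf : c * f = u ^ 2 := by
    apply mul_left_cancel₀ hde
    linear_combination h
  have hcop : IsCoprime c f :=
    (hab.of_isCoprime_of_dvd_left (dvd_mul_left c d)).of_isCoprime_of_dvd_right
      (dvd_mul_left f e)
  obtain ⟨r, s, hr, hs, hcr, hfs⟩ := exists_sq_aux c f u hc hf hcop hcf
  have hrodd : Odd r := by
    have : Odd (r ^ 2) := ((Int.odd_mul.mp (hcr ▸ haodd)).2)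
    exact (Int.odd_pow.mp this).resolve_right (by norm_num)
  have hsodd : Odd s := by
    have : Odd (s ^ 2) := ((Int.odd_mul.mp (hfs ▸ hbodd)).2)
    exact (Int.odd_pow.mp this).resolve_right (by norm_num)
  exact ⟨r, s, hrodd, hsodd, hr, hs, by rw [hcr], by rw [hfs]⟩

theorem pell_factorization_cases (p₁ p₂ : ℕ) (hp₁ : p₁.Prime) (hp₂ : p₂.Prime)
    (hne : p₁ ≠ p₂) (h₁ : p₁ % 4 = 3) (h₂ : p₂ % 4 = 3)
    (t u : ℤ) (ht : 0 < t) (hu : 0 < u) (htodd : Odd t) (huodd : Odd u)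
    (hpell : t ^ 2 - (p₁ * p₂ : ℤ) * u ^ 2 = 4) :
    Int.gcd (t - 2) (t + 2) = 1 ∧ (t - 2) * (t + 2) = (p₁ * p₂ : ℤ) * u ^ 2 ∧
    ∃ r s : ℤ, Odd r ∧ Odd s ∧ 0 < r ∧ 0 < s ∧
      ((t - 2 = p₁ * r ^ 2 ∧ t + 2 = p₂ * s ^ 2) ∨
       (t - 2 = p₂ * r ^ 2 ∧ t + 2 = p₁ * s ^ 2) ∨
       (t - 2 = p₁ * p₂ * r ^ 2 ∧ t + 2 = s ^ 2) ∨
       (t - 2 = r ^ 2 ∧ t + 2 = p₁ * p₂ * s ^ 2)) := by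
  have hp₁' : Prime (p₁ : ℤ) := Nat.prime_iff_prime_int.mp hp₁
  have hp₂' : Prime (p₂ : ℤ) := Nat.prime_iff_prime_int.mp hp₂
  have hp₁pos : (0:ℤ) < p₁ := by exact_mod_cast hp₁.pos
  have hp₂pos : (0:ℤ) < p₂ := by exact_mod_cast hp₂.pos
  have hp₁3 : (3:ℤ) ≤ p₁ := by
    have : 3 ≤ p₁ := by omega
    exact_mod_cast this
  have hp₂3 : (3:ℤ) ≤ p₂ := by
    have : 3 ≤ p₂ := by omega
    exact_mod_cast this
  have hu2 : (1:ℤ) ≤ u ^ 2 := by nlinarith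
  have hD : (9:ℤ) ≤ (p₁:ℤ) * p₂ := by nlinarith
  have ht13 : (13:ℤ) ≤ t ^ 2 := by nlinarith
  have ht3 : 3 ≤ t := by nlinarith
  have hprod : (t - 2) * (t + 2) = (p₁ * p₂ : ℤ) * u ^ 2 := by linear_combination hpell
  have hao : Odd (t - 2) := htodd.sub_even (by norm_num)
  have hbo : Odd (t + 2) := htodd.add_even (by norm_num)
  have hapos : 0 < t - 2 := by omega
  have hbpos : 0 < t + 2 := by omega
  -- gcd = 1
  have hgcd : Int.gcd (t - 2) (t + 2) = 1 := by
    set g := Int.gcd (t - 2) (t + 2) with hg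
    have hg4 : (g : ℤ) ∣ 4 := by
      have : (g : ℤ) ∣ (t + 2) - (t - 2) := dvd_sub (Int.gcd_dvd_right _ _) (Int.gcd_dvd_left _ _)
      simpa using this
    have hgodd : ¬ (2 : ℤ) ∣ (g : ℤ) := by
      intro h2g
      have : (2 : ℤ) ∣ t - 2 := h2g.trans (Int.gcd_dvd_left _ _)
      rw [Int.odd_iff] at hao
      omega
    have hg4' : g ∣ 4 := by exact_mod_cast hg4
    have hgle := Nat.le_of_dvd (by norm_num) hg4'
    interval_cases g
    · exact absurd hg4' (by norm_num)
    · rfl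
    · exact absurd (by norm_num) hgodd
    · exact absurd hg4' (by norm_num)
    · exact absurd (by norm_num) hgodd
  have hcop : IsCoprime (t - 2) (t + 2) := Int.isCoprime_iff_gcd_eq_one.mpr hgcd
  refine ⟨hgcd, hprod, ?_⟩
  have hd1 : (p₁ : ℤ) ∣ (t - 2) * (t + 2) := by rw [hprod]; exact ⟨p₂ * u ^ 2, by ring⟩
  have hd2 : (p₂ : ℤ) ∣ (t - 2) * (t + 2) := by rw [hprod]; exact ⟨p₁ * u ^ 2, by ring⟩
  have hc12 : IsCoprime (p₁ : ℤ) (p₂ : ℤ) := by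
    rw [Int.isCoprime_iff_gcd_eq_one]
    simpa [Int.gcd_natCast_natCast] using (Nat.coprime_primes hp₁ hp₂).mpr hne
  rcases (hp₁'.dvd_mul.mp hd1) with h1a | h1b <;>
    rcases (hp₂'.dvd_mul.mp hd2) with h2a | h2b
  · -- p₁ ∣ a, p₂ ∣ a : case 3
    have hDa : (p₁ * p₂ : ℤ) ∣ t - 2 := hc12.mul_dvd h1a h2a
    obtain ⟨r, s, hro, hso, hrp, hsp, har, hbs⟩ :=
      case_helper (p₁ * p₂) 1 (t - 2) (t + 2) u (by positivity) one_pos hapos hbpos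
        hao hbo hcop hDa (one_dvd _) (by linear_combination hprod)
    exact ⟨r, s, hro, hso, hrp, hsp, Or.inr (Or.inr (Or.inl ⟨har, by simpa using hbs⟩))⟩
  · -- p₁ ∣ a, p₂ ∣ b : case 1
    obtain ⟨r, s, hro, hso, hrp, hsp, har, hbs⟩ :=
      case_helper (p₁) (p₂) (t - 2) (t + 2) u hp₁pos hp₂pos hapos hbpos
        hao hbo hcop h1a h2b (by linear_combination hprod)
    exact ⟨r, s, hro, hso, hrp, hsp, Or.inl ⟨har, hbs⟩⟩
  · -- p₁ ∣ b, p₂ ∣ a : case 2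
    obtain ⟨r, s, hro, hso, hrp, hsp, har, hbs⟩ :=
      case_helper (p₂) (p₁) (t - 2) (t + 2) u hp₂pos hp₁pos hapos hbpos
        hao hbo hcop h2a h1b (by linear_combination hprod)
    exact ⟨r, s, hro, hso, hrp, hsp, Or.inr (Or.inl ⟨har, hbs⟩)⟩
  · -- p₁ ∣ b, p₂ ∣ b : case 4
    have hDb : (p₁ * p₂ : ℤ) ∣ t + 2 := hc12.mul_dvd h1b h2b
    obtain ⟨r, s, hro, hso, hrp, hsp, har, hbs⟩ :=
      case_helper 1 (p₁ * p₂) (t - 2) (t + 2) u one_pos (by positivity) hapos hbpos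
        hao hbo hcop (one_dvd _) hDb (by linear_combination hprod)
    exact ⟨r, s, hro, hso, hrp, hsp, Or.inr (Or.inr (Or.inr ⟨by simpa using har, hbs⟩))⟩
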